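/- Suppose $A_1, A_2, B : (0,1)\to\mathbb{R}$ are differentiable with $B > 0$, satisfy $B(s)^2 = s^{-2}A_1(s) + (1-s)^{-2}A_2(s)$ and $s(1-s)B(s)B'(s) = -(A_1'(s)+A_2'(s))$. Then $\frac{1+s}{s}A_1'(s) + \frac{2-s}{1-s}A_2'(s) - \frac{2(1-s)}{s^2}A_1(s) + \frac{2s}{(1-s)^2}A_2(s) = 0$ for all $s \in (0,1)$. -/

import Mathlib

/-- From `B² = A₁/s² + A₂/(1-s)²` and `s(1-s)BB' = -(A₁'+A₂')` with `B > 0` on `(0,1)`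
it follows that `((1+s)/s)A₁' + ((2-s)/(1-s))A₂' - (2(1-s)/s²)A₁ + (2s/(1-s)²)A₂ = 0`. -/
theorem stmt_9 (A₁ A₂ B : ℝ → ℝ)
    (hA₁ : ∀ s ∈ Set.Ioo (0 : ℝ) 1, DifferentiableAt ℝ A₁ s)
    (hA₂ : ∀ s ∈ Set.Ioo (0 : ℝ) 1, DifferentiableAt ℝ A₂ s)
    (hB : ∀ s ∈ Set.Ioo (0 : ℝ) 1, DifferentiableAt ℝ B s)
    (hBpos : ∀ s ∈ Set.Ioo (0 : ℝ) 1, 0 < B s)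
    (heq1 : ∀ s ∈ Set.Ioo (0 : ℝ) 1, (B s) ^ 2 = A₁ s / s ^ 2 + A₂ s / (1 - s) ^ 2)
    (heq2 : ∀ s ∈ Set.Ioo (0 : ℝ) 1,
      s * (1 - s) * B s * deriv B s = -(deriv A₁ s + deriv A₂ s)) :
    ∀ s ∈ Set.Ioo (0 : ℝ) 1,
      (1 + s) / s * deriv A₁ s + (2 - s) / (1 - s) * deriv A₂ s
        - 2 * (1 - s) / s ^ 2 * A₁ s + 2 * s / (1 - s) ^ 2 * A₂ s = 0 := by
  intro s hs
  obtain ⟨hs0, hs1⟩ := hs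
  have hsne : s ≠ 0 := ne_of_gt hs0
  have h1ne : (1 : ℝ) - s ≠ 0 := by intro h; linarith [sub_eq_zero.mp h]
  have hmem : Set.Ioo (0 : ℝ) 1 ∈ nhds s := isOpen_Ioo.mem_nhds ⟨hs0, hs1⟩
  have hBd := hB s ⟨hs0, hs1⟩
  have hA1 := hA₁ s ⟨hs0, hs1⟩
  have hA2 := hA₂ s ⟨hs0, hs1⟩
  have hev : (fun x => (B x) ^ 2) =ᶠ[nhds s]
      fun x => A₁ x / x ^ 2 + A₂ x / (1 - x) ^ 2 := by
    filter_upwards [hmem] with x hx using heq1 x hx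
  have hL : HasDerivAt (fun x => (B x) ^ 2) (2 * B s * deriv B s) s := by
    simpa [mul_comm] using (hBd.hasDerivAt.fun_pow 2)
  have hden1 : HasDerivAt (fun x : ℝ => x ^ 2) (2 * s) s := by
    simpa using hasDerivAt_pow 2 s
  have hden2 : HasDerivAt (fun x : ℝ => (1 - x) ^ 2) (-(2 * (1 - s))) s := by
    have h0 : HasDerivAt (fun x : ℝ => 1 - x) (-1) s := by
      simpa using (hasDerivAt_id s).const_sub 1
    have := h0.fun_pow 2
    simpa [mul_comm, mul_assoc] using this
  have hR : HasDerivAt (fun x => A₁ x / x ^ 2 + A₂ x / (1 - x) ^ 2)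
      ((deriv A₁ s * s ^ 2 - A₁ s * (2 * s)) / (s ^ 2) ^ 2
        + (deriv A₂ s * (1 - s) ^ 2 - A₂ s * (-(2 * (1 - s)))) / ((1 - s) ^ 2) ^ 2) s :=
    (hA1.hasDerivAt.div hden1 (pow_ne_zero 2 hsne)).add
      (hA2.hasDerivAt.div hden2 (pow_ne_zero 2 h1ne))
  have hd : 2 * B s * deriv B s =
      (deriv A₁ s * s ^ 2 - A₁ s * (2 * s)) / (s ^ 2) ^ 2
        + (deriv A₂ s * (1 - s) ^ 2 - A₂ s * (-(2 * (1 - s)))) / ((1 - s) ^ 2) ^ 2 := by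
    rw [← hL.deriv, hev.deriv_eq, hR.deriv]
  have h2 := heq2 s ⟨hs0, hs1⟩
  field_simp at hd ⊢
  linear_combination 2 * s ^ 2 * (1 - s) ^ 2 * h2 - hd
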